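/- Let α, β > 0 and n ∈ ℕ. Consider the hierarchical model in which ω is drawn from the Beta(α, β) distribution, then, given ω, η is drawn from the binomial distribution Bin(n, ω), and finally, given η, π is drawn from the Beta(α + η, β + n − η) distribution. Then the marginal distribution of π is exactly Beta(α, β); i.e., the measure on [0,1] obtained by the composition (bind) of these three kernels equals the Beta(α, β) measure. (This is part (i) of the paper's Proposition, stating that the marginal distribution of each weight vector π_t in the dependent Dirichlet construction is invariant, specialized here to each coordinate where the Dirichlet–multinomial hierarchy reduces to a beta–binomial hierarchy.) -/

import Mathlib

open MeasureTheory Set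

/-- The Beta(α, β) probability measure on ℝ, supported on `(0,1)`, with density
`x^(α-1) (1-x)^(β-1) / B(α,β)` with respect to Lebesgue measure, where
`B(α,β) = Γ(α)Γ(β)/Γ(α+β)`. -/
noncomputable def betaMeasure (α β : ℝ) : Measure ℝ :=
  volume.withDensity fun x =>
    ENNReal.ofReal (indicator (Ioo (0 : ℝ) 1)
      (fun x => x ^ (α - 1) * (1 - x) ^ (β - 1)
        / (Real.Gamma α * Real.Gamma β / Real.Gamma (α + β))) x)

/-- The binomial distribution with `n` trials and success probability `ω`, as a measure
on `ℕ`: it gives mass `C(n,k) ω^k (1-ω)^(n-k)` to each `k ∈ {0,…,n}`. -/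
noncomputable def binomialMeasure (n : ℕ) (ω : ℝ) : Measure ℕ :=
  ∑ k ∈ Finset.range (n + 1),
    ENNReal.ofReal ((n.choose k : ℝ) * ω ^ k * (1 - ω) ^ (n - k)) • Measure.dirac k

/-- Beta–binomial conjugacy, marginal invariance: if `ω ~ Beta(α,β)`, then `η | ω ~ Bin(n,ω)`,
and finally `π | η ~ Beta(α+η, β+n-η)`, the marginal distribution of `π` is exactly
`Beta(α,β)`. -/


lemma realBeta_pos {a b : ℝ} (ha : 0 < a) (hb : 0 < b) :
    0 < Real.Gamma a * Real.Gamma b / Real.Gamma (a + b) :=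
  div_pos (mul_pos (Real.Gamma_pos_of_pos ha) (Real.Gamma_pos_of_pos hb))
    (Real.Gamma_pos_of_pos (by linarith))

lemma complex_eq_real {a b x : ℝ} (hx0 : 0 ≤ x) (hx1 : x ≤ 1) :
    ((x:ℂ) ^ ((a:ℂ) - 1) * (1 - (x:ℂ)) ^ ((b:ℂ) - 1)) =
      ((x ^ (a-1) * (1-x) ^ (b-1) : ℝ) : ℂ) := by
  rw [show ((x:ℂ) ^ ((a:ℂ) - 1)) = ((x ^ (a-1) : ℝ) : ℂ) by
        rw [Complex.ofReal_cpow hx0]; push_cast; ring_nf,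
      show ((1 - (x:ℂ)) ^ ((b:ℂ) - 1)) = (((1-x) ^ (b-1) : ℝ) : ℂ) by
        rw [Complex.ofReal_cpow (by linarith)]; push_cast; ring_nf]
  rw [← Complex.ofReal_mul]

lemma realBetaIntegrableOn {a b : ℝ} (ha : 0 < a) (hb : 0 < b) :
    IntegrableOn (fun x : ℝ => x ^ (a - 1) * (1 - x) ^ (b - 1)) (Ioc 0 1) volume := by
  have h := (Complex.betaIntegral_convergent (u := a) (v := b) (by simpa) (by simpa)).1
  have h2 := h.re
  apply h2.congr
  filter_upwards [ae_restrict_mem measurableSet_Ioc] with x hx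
  rw [complex_eq_real hx.1.le hx.2]
  simp

lemma realBetaIntegral {a b : ℝ} (ha : 0 < a) (hb : 0 < b) :
    ∫ x in (0:ℝ)..1, x ^ (a - 1) * (1 - x) ^ (b - 1)
      = Real.Gamma a * Real.Gamma b / Real.Gamma (a + b) := by
  have hG := Complex.Gamma_mul_Gamma_eq_betaIntegral (s := a) (t := b) (by simpa) (by simpa)
  have hne : Complex.Gamma ((a:ℂ) + b) ≠ 0 := by
    rw [show ((a:ℂ) + b) = ((a + b : ℝ) : ℂ) by push_cast; ring, Complex.Gamma_ofReal]
    exact_mod_cast (Real.Gamma_pos_of_pos (by linarith)).ne'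
  have hBI : Complex.betaIntegral a b
      = ((∫ x in (0:ℝ)..1, x ^ (a - 1) * (1 - x) ^ (b - 1) : ℝ) : ℂ) := by
    rw [Complex.betaIntegral, ← intervalIntegral.integral_ofReal]
    apply intervalIntegral.integral_congr
    intro x hx
    rw [uIcc_of_le (by norm_num)] at hx
    exact complex_eq_real hx.1 hx.2
  have := hG
  rw [hBI] at this
  have h2 : ((Real.Gamma a * Real.Gamma b : ℝ) : ℂ)
      = ((Real.Gamma (a+b) * ∫ x in (0:ℝ)..1, x ^ (a - 1) * (1 - x) ^ (b - 1) : ℝ) : ℂ) := by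
    push_cast
    rw [← Complex.Gamma_ofReal, ← Complex.Gamma_ofReal, ← Complex.Gamma_ofReal] at *
    push_cast at this ⊢
    rw [this]
  have h3 := Complex.ofReal_injective h2
  field_simp
  rw [h3]
  ring

lemma lintegral_realBeta {a b : ℝ} (ha : 0 < a) (hb : 0 < b) :
    ∫⁻ x in Ioo (0:ℝ) 1, ENNReal.ofReal (x ^ (a - 1) * (1 - x) ^ (b - 1))
      = ENNReal.ofReal (Real.Gamma a * Real.Gamma b / Real.Gamma (a + b)) := by
  rw [Measure.restrict_congr_set Ioo_ae_eq_Ioc]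
  rw [← MeasureTheory.ofReal_integral_eq_lintegral_ofReal (realBetaIntegrableOn ha hb)]
  · rw [← intervalIntegral.integral_of_le (by norm_num), realBetaIntegral ha hb]
  · filter_upwards [ae_restrict_mem measurableSet_Ioc] with x hx
    exact mul_nonneg (Real.rpow_nonneg hx.1.le _) (Real.rpow_nonneg (by linarith [hx.2]) _)

lemma dens_meas (a b : ℝ) : Measurable fun x : ℝ =>
    ENNReal.ofReal (indicator (Ioo (0:ℝ) 1)
      (fun x => x ^ (a - 1) * (1 - x) ^ (b - 1)
        / (Real.Gamma a * Real.Gamma b / Real.Gamma (a + b))) x) := by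
  apply ENNReal.measurable_ofReal.comp
  apply Measurable.indicator _ measurableSet_Ioo
  fun_prop

lemma c_meas (n k : ℕ) : Measurable fun ω : ℝ =>
    ENNReal.ofReal ((n.choose k : ℝ) * ω ^ k * (1 - ω) ^ (n - k)) := by
  fun_prop

lemma rpow_split {x : ℝ} (hx : 0 < x) (a : ℝ) (k : ℕ) :
    x ^ (a + k - 1) = x ^ (a - 1) * x ^ k := by
  rw [show a + (k:ℝ) - 1 = (a - 1) + (k:ℝ) by ring, Real.rpow_add hx, Real.rpow_natCast]

lemma hstar {x : ℝ} (hx : x ∈ Ioo (0:ℝ) 1) {n k : ℕ} (hk : k ≤ n) (α β : ℝ) :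
    x ^ (α + (k:ℝ) - 1) * (1 - x) ^ (β + ((n:ℝ) - k) - 1)
      = (x ^ k * (1 - x) ^ (n - k)) * (x ^ (α - 1) * (1 - x) ^ (β - 1)) := by
  have h1x : 0 < 1 - x := by linarith [hx.2]
  have hc : ((n:ℝ) - k) = ((n - k : ℕ) : ℝ) := by
    rw [Nat.cast_sub hk]
  rw [rpow_split hx.1 α k, hc, rpow_split h1x β (n - k)]
  ring


lemma hsum (x : ℝ) (n : ℕ) :
    ∑ k ∈ Finset.range (n + 1), (n.choose k : ℝ) * x ^ k * (1 - x) ^ (n - k) = 1 := by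
  have h := add_pow x (1 - x) n
  simp only [add_sub_cancel, one_pow] at h
  refine Eq.trans ?_ h.symm
  exact Finset.sum_congr rfl fun k _ => by ring

theorem beta_binomial_marginal_invariance (α β : ℝ) (hα : 0 < α) (hβ : 0 < β) (n : ℕ) :
    (betaMeasure α β).bind (fun ω =>
      (binomialMeasure n ω).bind (fun η =>
        betaMeasure (α + η) (β + ((n : ℝ) - η)))) = betaMeasure α β := by
  -- shorthand
  set Bab := Real.Gamma α * Real.Gamma β / Real.Gamma (α + β) with hBab
  have hBabpos : 0 < Bab := realBeta_pos hα hβ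
  have hg : Measurable fun k : ℕ => betaMeasure (α + k) (β + ((n:ℝ) - k)) :=
    measurable_from_top
  have inner_apply : ∀ (ω : ℝ) (s : Set ℝ), MeasurableSet s →
      ((binomialMeasure n ω).bind fun η : ℕ => betaMeasure (α + η) (β + ((n:ℝ) - η))) s
        = ∑ k ∈ Finset.range (n+1),
            ENNReal.ofReal ((n.choose k : ℝ) * ω ^ k * (1 - ω) ^ (n - k))
              * betaMeasure (α + k) (β + ((n:ℝ) - k)) s := by
    intro ω s hs
    rw [Measure.bind_apply hs hg.aemeasurable, binomialMeasure, lintegral_finset_sum_measure]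
    refine Finset.sum_congr rfl fun k _ => ?_
    rw [lintegral_smul_measure, lintegral_dirac, smul_eq_mul]
  have hκ : Measurable fun ω : ℝ =>
      (binomialMeasure n ω).bind fun η : ℕ => betaMeasure (α + η) (β + ((n:ℝ) - η)) := by
    apply Measure.measurable_of_measurable_coe
    intro s hs
    simp only [inner_apply _ s hs]
    exact Finset.measurable_sum _ fun k _ => (c_meas n k).mul_const _
  ext s hs
  rw [Measure.bind_apply hs hκ.aemeasurable]
  rw [lintegral_congr fun ω => inner_apply ω s hs]
  rw [lintegral_finset_sum _ fun k _ => (c_meas n k).mul_const _]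
  -- compute each integral
  have hIk : ∀ k ∈ Finset.range (n+1),
      ∫⁻ ω, ENNReal.ofReal ((n.choose k : ℝ) * ω ^ k * (1 - ω) ^ (n - k)) ∂(betaMeasure α β)
        = ENNReal.ofReal ((n.choose k : ℝ) / Bab)
            * ENNReal.ofReal (Real.Gamma (α + k) * Real.Gamma (β + ((n:ℝ) - k))
                / Real.Gamma ((α + k) + (β + ((n:ℝ) - k)))) := by
    intro k hk
    have hkn : k ≤ n := Nat.lt_succ_iff.mp (Finset.mem_range.mp hk)
    rw [betaMeasure, lintegral_withDensity_eq_lintegral_mul _ (dens_meas α β) (c_meas n k)]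
    have hpt : (fun x : ℝ =>
        ((fun x : ℝ => ENNReal.ofReal (indicator (Ioo (0:ℝ) 1)
          (fun x => x ^ (α - 1) * (1 - x) ^ (β - 1) / Bab) x))
          * fun ω : ℝ => ENNReal.ofReal ((n.choose k : ℝ) * ω ^ k * (1 - ω) ^ (n - k))) x)
        = fun x : ℝ => indicator (Ioo (0:ℝ) 1)
            (fun x => ENNReal.ofReal ((n.choose k : ℝ) / Bab)
              * ENNReal.ofReal (x ^ (α + (k:ℝ) - 1) * (1 - x) ^ (β + ((n:ℝ) - k) - 1))) x := by
      funext x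
      by_cases hx : x ∈ Ioo (0:ℝ) 1
      · have h1x : 0 < 1 - x := by linarith [hx.2]
        simp only [Pi.mul_apply, indicator_of_mem hx]
        rw [← ENNReal.ofReal_mul (div_nonneg (mul_nonneg (Real.rpow_nonneg hx.1.le _)
            (Real.rpow_nonneg h1x.le _)) hBabpos.le), ← ENNReal.ofReal_mul
          (div_nonneg (Nat.cast_nonneg _) hBabpos.le)]
        congr 1
        rw [hstar hx hkn α β]
        field_simp
      · simp [indicator_of_notMem hx]
    rw [hpt, lintegral_indicator measurableSet_Ioo _,
      lintegral_const_mul' _ _ ENNReal.ofReal_ne_top,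
      lintegral_realBeta (by positivity) (by
        have : (0:ℝ) ≤ (n:ℝ) - k := by
          have : (k:ℝ) ≤ (n:ℝ) := Nat.cast_le.mpr hkn; linarith
        linarith)]
  rw [Finset.sum_congr rfl fun k hk => by
    rw [lintegral_mul_const _ (c_meas n k), hIk k hk]]
  -- now express betaMeasure applications as set lintegrals and combine
  have hν : ∀ (a b : ℝ), betaMeasure a b s = ∫⁻ x in s, ENNReal.ofReal (indicator (Ioo (0:ℝ) 1)
      (fun x => x ^ (a - 1) * (1 - x) ^ (b - 1)
        / (Real.Gamma a * Real.Gamma b / Real.Gamma (a + b))) x) := fun a b =>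
    withDensity_apply _ hs
  simp only [hν]
  rw [Finset.sum_congr rfl fun k _ => (lintegral_const_mul' _ _
    (ENNReal.mul_ne_top ENNReal.ofReal_ne_top ENNReal.ofReal_ne_top)).symm]
  rw [← lintegral_finset_sum _ fun k _ => (dens_meas _ _).const_mul _]
  refine lintegral_congr fun x => ?_
  by_cases hx : x ∈ Ioo (0:ℝ) 1
  · have h1x : 0 < 1 - x := by linarith [hx.2]
    simp only [indicator_of_mem hx]
    have hterm : ∀ k ∈ Finset.range (n+1),
        ENNReal.ofReal ((n.choose k : ℝ) / Bab) *
            ENNReal.ofReal (Real.Gamma (α + k) * Real.Gamma (β + ((n:ℝ) - k))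
              / Real.Gamma (α + k + (β + ((n:ℝ) - k)))) *
          ENNReal.ofReal (x ^ (α + (k:ℝ) - 1) * (1 - x) ^ (β + ((n:ℝ) - k) - 1) /
            (Real.Gamma (α + k) * Real.Gamma (β + ((n:ℝ) - k))
              / Real.Gamma (α + k + (β + ((n:ℝ) - k)))))
        = ENNReal.ofReal ((x ^ (α - 1) * (1 - x) ^ (β - 1) / Bab)
            * ((n.choose k : ℝ) * x ^ k * (1 - x) ^ (n - k))) := by
      intro k hk
      have hkn : k ≤ n := Nat.lt_succ_iff.mp (Finset.mem_range.mp hk)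
      have hnk : (0:ℝ) ≤ (n:ℝ) - k := by
        have : (k:ℝ) ≤ (n:ℝ) := Nat.cast_le.mpr hkn; linarith
      have hBk := realBeta_pos (show (0:ℝ) < α + k by positivity)
        (show (0:ℝ) < β + ((n:ℝ) - k) by linarith)
      rw [← ENNReal.ofReal_mul (div_nonneg (Nat.cast_nonneg _) hBabpos.le),
          ← ENNReal.ofReal_mul (mul_nonneg (div_nonneg (Nat.cast_nonneg _) hBabpos.le) hBk.le)]
      congr 1
      rw [hstar hx hkn α β]
      field_simp
    rw [Finset.sum_congr rfl hterm, ← ENNReal.ofReal_sum_of_nonneg (fun k _ =>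
      mul_nonneg (div_nonneg (mul_nonneg (Real.rpow_nonneg hx.1.le _)
        (Real.rpow_nonneg h1x.le _)) hBabpos.le)
        (mul_nonneg (mul_nonneg (Nat.cast_nonneg _) (pow_nonneg hx.1.le _))
          (pow_nonneg h1x.le _)))]
    congr 1
    rw [← Finset.mul_sum, hsum x n, mul_one]
  · simp [indicator_of_notMem hx]
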